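/- Let T be a binary tree with m nodes, numbered 0,...,m−1 in inorder, with root τ. Then for any node u (0 ≤ u < m), the sum over all nodes j with inorder number less than u of (l_j + r_j) equals 2u − L_τ − l_u + Ldepth(u) − Rdepth(u) + 1. -/

import Mathlib

inductive BT where
  | leaf : BT
  | node : BT → BT → BT
deriving DecidableEq

namespace BT

/-- Number of nodes. -/
def size : BT → ℕ
  | leaf => 0
  | node l r => l.size + r.size + 1

/-- Inorder list of node positions (paths from the root; `false` = left step). -/
def inList : BT → List (List Bool)
  | leaf => []
  | node l r => (l.inList).map (List.cons false) ++ [] :: (r.inList).map (List.cons true)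

/-- Preorder list of node positions. -/
def preList : BT → List (List Bool)
  | leaf => []
  | node l r => [] :: ((l.preList).map (List.cons false) ++ (r.preList).map (List.cons true))

/-- Subtree rooted at a given position, if the position is valid. -/
def subtree? : BT → List Bool → Option BT
  | t, [] => some t
  | leaf, _ :: _ => none
  | node l r, b :: p => if b then r.subtree? p else l.subtree? p

/-- Size of the left spine (maximal path following left children, top node included). -/
def Lspine : BT → ℕ
  | leaf => 0
  | node l _ => l.Lspine + 1

/-- Size of the right spine. -/
def Rspine : BT → ℕ
  | leaf => 0
  | node _ r => r.Rspine + 1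

/-- Size of the left inner spine of the root: right spine of the left child. -/
def lv : BT → ℕ
  | leaf => 0
  | node l _ => l.Rspine

/-- Size of the right inner spine of the root: left spine of the right child. -/
def rv : BT → ℕ
  | leaf => 0
  | node _ r => r.Lspine

/-- Sum of `f` over all (sub)trees rooted at nodes of the tree. -/
def sumNodes (f : BT → ℕ) : BT → ℕ
  | leaf => 0
  | node l r => f (node l r) + sumNodes f l + sumNodes f r

/-- Number of leaf nodes (nodes with no children). -/
def leaves : BT → ℕ
  | leaf => 0
  | node leaf leaf => 1
  | node l r => leaves l + leaves r

end BT

/-- Longest common prefix of two paths: the LCA of two positions in a binary tree. -/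
def lcp : List Bool → List Bool → List Bool
  | a :: p, b :: q => if a = b then a :: lcp p q else []
  | _, _ => []

/-- Index of the minimum element of a list (0 if empty). -/
def minIdx {α : Type*} [LinearOrder α] (l : List α) : ℕ :=
  match l.argmin id with
  | none => 0
  | some a => l.idxOf a

/-- Cartesian tree construction with fuel. -/
def cartesianAux {α : Type*} [LinearOrder α] : ℕ → List α → BT
  | 0, _ => .leaf
  | _ + 1, [] => .leaf
  | n + 1, l@(_ :: _) =>
      .node (cartesianAux n (l.take (minIdx l))) (cartesianAux n (l.drop (minIdx l + 1)))

/-- The Cartesian tree of a list: root at the position of the minimum,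
recursively built on the prefix before and the suffix after the minimum. -/
def cartesian {α : Type*} [LinearOrder α] (l : List α) : BT :=
  cartesianAux l.length l

/-- `k` is the position of the minimum of `A` on the range `[i, j]`. -/
def isArgmin {α : Type*} [LinearOrder α] {n : ℕ} (A : Fin n → α) (i j k : Fin n) : Prop :=
  i ≤ k ∧ k ≤ j ∧ ∀ m, i ≤ m → m ≤ j → A k ≤ A m

/-- `k` is the position of the second smallest element of `A` on the range `[i, j]`. -/
def isSecondMin {α : Type*} [LinearOrder α] {n : ℕ} (A : Fin n → α) (i j k : Fin n) : Prop :=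
  i ≤ k ∧ k ≤ j ∧
    ∃ m, isArgmin A i j m ∧ k ≠ m ∧ ∀ l, i ≤ l → l ≤ j → l ≠ m → A k ≤ A l

/-- The node with inorder number `i` in `t` has a left child. -/
def hasLeftChildAt (t : BT) (i : ℕ) : Prop :=
  ∃ (p : List Bool) (ll lr r : BT),
    t.inList[i]? = some p ∧ t.subtree? p = some (.node (.node ll lr) r)

/-- `l_j + r_j` for the node with inorder number `j` of `t` (0 if out of range). -/
def lrAt (t : BT) (j : ℕ) : ℕ :=
  ((t.inList[j]?).bind t.subtree?).elim 0 fun s => s.lv + s.rv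

theorem BT.inList_length (t : BT) : t.inList.length = t.size := by
  induction t with
  | leaf => simp [BT.inList, BT.size]
  | node l r ihl ihr => simp [BT.inList, BT.size, ihl, ihr]; omega

theorem lrAt_left (l r : BT) (j : ℕ) (h : j < l.size) :
    lrAt (.node l r) j = lrAt l j := by
  unfold lrAt
  rw [BT.inList, List.getElem?_append_left (by simp [BT.inList_length]; omega),
    List.getElem?_map]
  cases hj : l.inList[j]? with
  | none => simp
  | some q => simp [BT.subtree?]

theorem lrAt_root (l r : BT) :
    lrAt (.node l r) l.size = l.Rspine + r.Lspine := by
  unfold lrAt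
  rw [BT.inList, List.getElem?_append_right (by simp [BT.inList_length])]
  simp [BT.inList_length, BT.subtree?, BT.lv, BT.rv]

theorem lrAt_right (l r : BT) (j : ℕ) :
    lrAt (.node l r) (l.size + 1 + j) = lrAt r j := by
  unfold lrAt
  rw [BT.inList, List.getElem?_append_right (by simp [BT.inList_length]; omega)]
  have : l.size + 1 + j - (l.inList.map (List.cons false)).length = j + 1 := by
    simp [BT.inList_length]; omega
  rw [this, List.getElem?_cons_succ, List.getElem?_map]
  cases hj : r.inList[j]? with
  | none => simp
  | some q => simp [BT.subtree?]

theorem sum_split (l r : BT) (k : ℕ) :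
    ∑ j ∈ Finset.range (l.size + 1 + k), lrAt (.node l r) j
      = (∑ j ∈ Finset.range l.size, lrAt l j) + (l.Rspine + r.Lspine)
        + ∑ j ∈ Finset.range k, lrAt r j := by
  rw [Finset.sum_range_add, Finset.sum_range_succ]
  congr 1
  · congr 1
    · exact Finset.sum_congr rfl fun j hj =>
        lrAt_left l r j (Finset.mem_range.mp hj)
    · exact lrAt_root l r
  · exact Finset.sum_congr rfl fun j _ => lrAt_right l r j

theorem sum_total (t : BT) :
    (∑ j ∈ Finset.range t.size, lrAt t j) + t.Lspine + t.Rspine = 2 * t.size := by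
  induction t with
  | leaf => simp [BT.size, BT.Lspine, BT.Rspine]
  | node l r ihl ihr =>
    have hsz : (BT.node l r).size = l.size + 1 + r.size := by
      simp [BT.size]; omega
    rw [hsz, sum_split, BT.Lspine, BT.Rspine]
    omega

/-- Prefix-sum identity: for a node `u` (inorder numbering from 0) at position `p`
with subtree `s`, `∑_{j<u} (l_j + r_j) = 2u − L_τ − l_u + Ldepth(u) − Rdepth(u) + 1`,
where `Ldepth(u) = p.count false` and `Rdepth(u) = p.count true`
(stated additively to avoid truncated subtraction). -/
theorem stmt7 (t : BT) (u : ℕ) (p : List Bool) (s : BT)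
    (hp : t.inList[u]? = some p) (hs : t.subtree? p = some s) :
    (∑ j ∈ Finset.range u, lrAt t j) + t.Lspine + s.lv + p.count true
      = 2 * u + p.count false + 1 := by
  induction t generalizing u p s with
  | leaf => simp [BT.inList] at hp
  | node l r ihl ihr =>
    have hu : u < l.size + 1 + r.size := by
      obtain ⟨h, -⟩ := List.getElem?_eq_some_iff.mp hp
      have hl := (BT.node l r).inList_length
      simp [BT.size] at hl
      omega
    rcases lt_trichotomy u l.size with h | h | h
    · -- u in left subtree
      rw [BT.inList, List.getElem?_append_left (by simp [BT.inList_length]; omega),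
        List.getElem?_map] at hp
      obtain ⟨p', hp', rfl⟩ := Option.map_eq_some_iff.mp hp
      have hs' : l.subtree? p' = some s := by simpa [BT.subtree?] using hs
      have key := ihl u p' s hp' hs'
      have hsum : ∑ j ∈ Finset.range u, lrAt (.node l r) j
          = ∑ j ∈ Finset.range u, lrAt l j :=
        Finset.sum_congr rfl fun j hj =>
          lrAt_left l r j (lt_of_lt_of_le (Finset.mem_range.mp hj) h.le)
      rw [hsum, BT.Lspine]
      simp [List.count_cons] at key ⊢
      omega
    · -- u is the root
      subst h
      rw [BT.inList, List.getElem?_append_right (by simp [BT.inList_length])] at hp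
      simp [BT.inList_length] at hp
      subst hp
      rw [BT.subtree?] at hs
      obtain rfl : BT.node l r = s := by injection hs
      have key := sum_total l
      have hsum : ∑ j ∈ Finset.range l.size, lrAt (.node l r) j
          = ∑ j ∈ Finset.range l.size, lrAt l j :=
        Finset.sum_congr rfl fun j hj => lrAt_left l r j (Finset.mem_range.mp hj)
      rw [hsum, BT.Lspine, BT.lv]
      simp only [List.count_nil]
      omega
    · -- u in right subtree
      obtain ⟨u', rfl⟩ : ∃ u', u = l.size + 1 + u' := ⟨u - l.size - 1, by omega⟩
      rw [BT.inList, List.getElem?_append_right (by simp [BT.inList_length]; omega)] at hp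
      have hidx : l.size + 1 + u' - (l.inList.map (List.cons false)).length = u' + 1 := by
        simp [BT.inList_length]; omega
      rw [hidx, List.getElem?_cons_succ, List.getElem?_map] at hp
      obtain ⟨p', hp', rfl⟩ := Option.map_eq_some_iff.mp hp
      have hs' : r.subtree? p' = some s := by simpa [BT.subtree?] using hs
      have key := ihr u' p' s hp' hs'
      have keyl := sum_total l
      rw [sum_split, BT.Lspine]
      simp [List.count_cons] at key ⊢
      omega
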